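/- Γ is uniform if and only if H̃^0(Δ(Γ_{b,q})) = 0 for every b ∈ Γ₊ and every integer q with 3 ≤ q ≤ rk(b). -/

import Mathlib

/-- A finite ranked poset: a partial order with a unique minimal element `star`
and a rank function `rk` such that `rk star = 0`, covering relations increase the
rank by exactly one, and `rk` is strictly monotone (for a finite poset this is
equivalent to: all maximal chains in `[star, x]` have the same length `rk x`). -/
structure RankedPoset (Γ : Type) [PartialOrder Γ] where
  star : Γ
  rk : Γ → ℕ
  bot_le : ∀ x, star ≤ x
  rk_star : rk star = 0
  rk_covBy : ∀ ⦃x y : Γ⦄, x ⋖ y → rk y = rk x + 1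
  rk_strictMono : StrictMono rk

variable {Γ : Type} [PartialOrder Γ]

/-- Basis of the degree `t` part of the (shifted) reduced chain complex of the order
complex of `{a : Γ // P a}`: strictly decreasing lists `p_{t-2} > ⋯ > p₀` of length
`t - 1` of elements satisfying `P`.  Thus `t = 0` gives the zero space, `t = 1` gives
`C₋₁` (spanned by the empty list), and in general degree `t` corresponds to the
`(t-2)`-chains of the order complex. -/
abbrev OrderChainBasis (P : Γ → Prop) (t : ℕ) : Type :=
  {l : List Γ // l.length + 1 = t ∧ List.Pairwise (· > ·) l ∧ ∀ a ∈ l, P a}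

/-- The degree `t` part (`= C_{t-2}`) of the reduced chain complex over `F` of the order
complex of `{a : Γ // P a}`. -/
abbrev OrderChain (F : Type) [Field F] (P : Γ → Prop) (t : ℕ) : Type :=
  OrderChainBasis P t →₀ F

/-- The basis chain obtained by deleting the `i`-th entry of the chain `l`. -/
def OrderChainBasis.erase {P : Γ → Prop} {t : ℕ} (l : OrderChainBasis P (t + 1))
    (i : Fin l.1.length) : OrderChainBasis P t :=
  ⟨l.1.eraseIdx i, by
      have h1 := List.length_eraseIdx_add_one (l := l.1) (i := i) i.isLt
      have h2 := l.2.1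
      omega,
    List.Pairwise.sublist (l.1.eraseIdx_sublist i) l.2.2.1,
    fun a ha => l.2.2.2 a ((l.1.eraseIdx_sublist i).subset ha)⟩

/-- The simplicial boundary `∂ : C_{t-1} → C_{t-2}`,
`∂(p_n > ⋯ > p₀) = Σᵢ (-1)ⁱ (p_n > ⋯ > p̂_{n-i} > ⋯ > p₀)` (for `n = 0` this is
`∂(p₀) = 1 ∈ C₋₁`). -/
noncomputable def ocBoundary (F : Type) [Field F] (P : Γ → Prop) (t : ℕ) :
    OrderChain F P (t + 1) →ₗ[F] OrderChain F P t :=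
  Finsupp.lsum F fun l => LinearMap.toSpanSingleton F _
    (∑ i : Fin l.1.length, ((-1 : F) ^ (i : ℕ)) • Finsupp.single (l.erase i) (1 : F))

/-- `redHomology F P t` is the reduced homology `H̃_{t-1}` (over `F`) of the order complex
of `{a : Γ // P a}`: cycles in degree `t+1` (`= C_{t-1}`) modulo boundaries.  (Since the
boundary map squares to zero, boundaries are contained in cycles, and this agrees with
the usual definition; in particular `t = 0` gives `H̃₋₁`.) -/
abbrev redHomology (F : Type) [Field F] (P : Γ → Prop) (t : ℕ) : Type :=
  @HasQuotient.Quotient _ _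
    (Submodule.hasQuotient (R := F) (M := ↥(LinearMap.ker (ocBoundary F P t))))
    ((LinearMap.range (ocBoundary F P (t + 1))).comap
      (LinearMap.ker (ocBoundary F P t)).subtype)

/-- `redCohomology F P t` is the reduced cohomology `H̃^{t-1}` (over `F`) of the order
complex of `{a : Γ // P a}`, computed from the `F`-linear dual complex. -/
abbrev redCohomology (F : Type) [Field F] (P : Γ → Prop) (t : ℕ) : Type :=
  @HasQuotient.Quotient _ _
    (Submodule.hasQuotient (R := F) (M := ↥(LinearMap.ker ((ocBoundary F P (t + 1)).dualMap))))
    ((LinearMap.range ((ocBoundary F P t).dualMap)).comap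
      (LinearMap.ker ((ocBoundary F P (t + 1)).dualMap)).subtype)

/-- Membership in `Γ_{b,q} = {a | * < a < b and d(b,a) ≤ q - 1}`. -/
def memGbq (R : RankedPoset Γ) (b : Γ) (q : ℕ) (a : Γ) : Prop :=
  R.star < a ∧ a < b ∧ R.rk b - R.rk a ≤ q - 1

noncomputable example (F : Type) [Field F] (P : Γ → Prop) (t : ℕ) : Module F (redHomology F P t) :=
  inferInstance
noncomputable example (F : Type) [Field F] (P : Γ → Prop) (t : ℕ) : Module F (redCohomology F P t) :=
  inferInstance

/-- `a ∈ S_x(1)`: `a < x` and `d(x,a) = 1`. -/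
def memS1 {Γ : Type} [PartialOrder Γ] (R : RankedPoset Γ) (x a : Γ) : Prop :=
  a < x ∧ R.rk x - R.rk a = 1

/-- `Γ` is uniform if for every `x ∈ Γ₊` the equivalence relation on `S_x(1)` generated
by `a ∼_x b ↔ ∃ c ∈ S_a(1) ∩ S_b(1)` has exactly one equivalence class. -/
def RankedPoset.Uniform {Γ : Type} [PartialOrder Γ] (R : RankedPoset Γ) : Prop :=
  ∀ x : Γ, x ≠ R.star →
    (∃ a, memS1 R x a) ∧
      ∀ a b : Γ, memS1 R x a → memS1 R x b →
        Relation.EqvGen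
          (fun u v => memS1 R x u ∧ memS1 R x v ∧ ∃ c, memS1 R u c ∧ memS1 R v c) a b


section AuxCombinatorics

variable {Γ : Type} [PartialOrder Γ]

/-- One comparability step inside `P`. -/
def pstep (P : Γ → Prop) (u v : Γ) : Prop := P u ∧ P v ∧ (u < v ∨ v < u)

lemma pstep_symm (P : Γ → Prop) : Symmetric (pstep P) :=
  fun _ _ h => ⟨h.2.1, h.1, h.2.2.symm⟩

/-- The vertex basis element `[a]`. -/
def vtx (P : Γ → Prop) (a : Γ) (ha : P a) : OrderChainBasis P 2 :=
  ⟨[a], by simp, by simp, by simpa using ha⟩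

/-- The edge basis element `[b, a]` for `a < b`. -/
def edg (P : Γ → Prop) {a b : Γ} (hab : a < b) (ha : P a) (hb : P b) :
    OrderChainBasis P 3 :=
  ⟨[b, a], by simp, by simp [hab], by
    intro x hx
    rcases List.mem_pair.mp hx with rfl | rfl
    · exact hb
    · exact ha⟩

/-- The empty-chain basis element. -/
def nil1 (P : Γ → Prop) : OrderChainBasis P 1 := ⟨[], by simp, by simp, by simp⟩

lemma vtx_surj {P : Γ → Prop} (v : OrderChainBasis P 2) :
    ∃ a ha, v = vtx P a ha := by
  obtain ⟨l, hl, hp, hP⟩ := v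
  match l, hl with
  | [a], _ => exact ⟨a, hP a (by simp), Subtype.ext rfl⟩

lemma edg_surj {P : Γ → Prop} (e : OrderChainBasis P 3) :
    ∃ (a b : Γ) (hab : a < b) (ha : P a) (hb : P b), e = edg P hab ha hb := by
  obtain ⟨l, hl, hp, hP⟩ := e
  match l, hl with
  | [b, a], _ =>
    have hab : a < b := by
      have := List.pairwise_cons.mp hp
      simpa using this.1 a (by simp)
    exact ⟨a, b, hab, hP a (by simp), hP b (by simp), Subtype.ext rfl⟩

end AuxCombinatorics
section AuxAlgebra

variable {Γ : Type} [PartialOrder Γ] (F : Type) [Field F] (P : Γ → Prop)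

lemma ocBoundary_vtx (a : Γ) (ha : P a) :
    ocBoundary F P 1 (Finsupp.single (vtx P a ha) (1 : F)) =
      Finsupp.single (nil1 P) 1 := by
  have key : ∀ i : Fin ((vtx P a ha).1.length),
      ((vtx P a ha).erase i : OrderChainBasis P 1) = nil1 P := by
    rintro ⟨i, hi⟩
    match i, hi with
    | 0, _ => exact Subtype.ext rfl
  rw [ocBoundary, Finsupp.lsum_single, LinearMap.toSpanSingleton_apply_one]
  rw [show (Finset.univ : Finset (Fin ((vtx P a ha).1.length))) = {⟨0, by simp [vtx]⟩} from rfl]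
  rw [Finset.sum_singleton, key]
  simp

lemma ocBoundary_edg {a b : Γ} (hab : a < b) (ha : P a) (hb : P b) :
    ocBoundary F P 2 (Finsupp.single (edg P hab ha hb) (1 : F)) =
      Finsupp.single (vtx P a ha) 1 - Finsupp.single (vtx P b hb) 1 := by
  have h0 : ((edg P hab ha hb).erase ⟨0, by simp [edg]⟩ : OrderChainBasis P 2) =
      vtx P a ha := Subtype.ext rfl
  have h1 : ((edg P hab ha hb).erase ⟨1, by simp [edg]⟩ : OrderChainBasis P 2) =
      vtx P b hb := Subtype.ext rfl
  rw [ocBoundary, Finsupp.lsum_single, LinearMap.toSpanSingleton_apply_one]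
  rw [show (Finset.univ : Finset (Fin ((edg P hab ha hb).1.length))) =
    {⟨0, by simp [edg]⟩, ⟨1, by simp [edg]⟩} from rfl]
  rw [Finset.sum_insert (by simp), Finset.sum_singleton, h0, h1]
  simp [sub_eq_add_neg]

end AuxAlgebra
section AuxHomology

variable {Γ : Type} [PartialOrder Γ] (F : Type) [Field F] (P : Γ → Prop)

lemma subsingleton_H0_iff :
    Subsingleton (redCohomology F P 1) ↔
      LinearMap.ker ((ocBoundary F P 2).dualMap) ≤
        LinearMap.range ((ocBoundary F P 1).dualMap) :=
  Submodule.Quotient.subsingleton_iff.trans Submodule.comap_subtype_eq_top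

lemma conn_subsingleton (a₀ : Γ) (h₀ : P a₀)
    (hconn : ∀ a, P a → Relation.ReflTransGen (pstep P) a₀ a) :
    Subsingleton (redCohomology F P 1) := by
  rw [subsingleton_H0_iff]
  intro f hf
  have hker : ∀ x, f (ocBoundary F P 2 x) = 0 := by
    intro x
    have h := DFunLike.congr_fun (LinearMap.mem_ker.mp hf) x
    simpa [LinearMap.dualMap_apply] using h
  have hval : ∀ b, Relation.ReflTransGen (pstep P) a₀ b → ∀ hb : P b,
      f (Finsupp.single (vtx P b hb) 1) = f (Finsupp.single (vtx P a₀ h₀) 1) := by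
    intro b hb
    induction hb with
    | refl => intro _; rfl
    | tail _ hstep ih =>
      rename_i u v _
      intro hv
      obtain ⟨hu, hv', hcomp⟩ := hstep
      have key : f (Finsupp.single (vtx P u hu) 1) = f (Finsupp.single (vtx P v hv) 1) := by
        rcases hcomp with h | h
        · have := hker (Finsupp.single (edg P h hu hv) 1)
          rw [ocBoundary_edg, map_sub] at this
          exact sub_eq_zero.mp this
        · have := hker (Finsupp.single (edg P h hv hu) 1)
          rw [ocBoundary_edg, map_sub] at this
          exact (sub_eq_zero.mp this).symm
      rw [← key, ih hu]
  set c₀ := f (Finsupp.single (vtx P a₀ h₀) 1) with hc₀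
  refine ⟨c₀ • Finsupp.lsum F (fun _ : OrderChainBasis P 1 => (LinearMap.id : F →ₗ[F] F)), ?_⟩
  apply Finsupp.lhom_ext'
  intro v
  apply LinearMap.ext_ring
  obtain ⟨a, ha, rfl⟩ := vtx_surj v
  simp only [LinearMap.coe_comp, Function.comp_apply, Finsupp.lsingle_apply,
    LinearMap.dualMap_apply]
  rw [ocBoundary_vtx]
  simp only [LinearMap.smul_apply, Finsupp.lsum_single, LinearMap.id_apply, smul_eq_mul, mul_one]
  rw [hval a (hconn a ha) ha]

lemma subsingleton_conn (h : Subsingleton (redCohomology F P 1)) :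
    ∀ a b, P a → P b → Relation.ReflTransGen (pstep P) a b := by
  classical
  rw [subsingleton_H0_iff] at h
  intro a b ha hb
  set C : Γ → Prop := Relation.ReflTransGen (pstep P) a with hC
  set f : Module.Dual F (OrderChain F P 2) :=
    Finsupp.lsum F fun v : OrderChainBasis P 2 =>
      if ∀ x ∈ v.1, C x then (LinearMap.id : F →ₗ[F] F) else 0 with hfdef
  have hfv : ∀ v (hv : P v), f (Finsupp.single (vtx P v hv) 1) =
      if C v then 1 else 0 := by
    intro v hv
    rw [hfdef, Finsupp.lsum_single]
    by_cases hcv : C v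
    · rw [if_pos (by simpa [vtx] using hcv), if_pos hcv]; simp
    · rw [if_neg (by simpa [vtx] using hcv), if_neg hcv]; simp
  have hf : f ∈ LinearMap.ker ((ocBoundary F P 2).dualMap) := by
    rw [LinearMap.mem_ker]
    apply Finsupp.lhom_ext'
    intro e
    apply LinearMap.ext_ring
    obtain ⟨x, y, hxy, hx, hy, rfl⟩ := edg_surj e
    simp only [LinearMap.coe_comp, Function.comp_apply, Finsupp.lsingle_apply,
      LinearMap.dualMap_apply, LinearMap.zero_apply, LinearMap.zero_comp]
    rw [ocBoundary_edg, map_sub, hfv x hx, hfv y hy]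
    have hiff : C x ↔ C y := by
      constructor
      · intro hcx; exact hcx.tail ⟨hx, hy, Or.inl hxy⟩
      · intro hcy; exact hcy.tail ⟨hy, hx, Or.inr hxy⟩
    by_cases hcx : C x
    · rw [if_pos hcx, if_pos (hiff.mp hcx)]; ring
    · rw [if_neg hcx, if_neg (fun hcy => hcx (hiff.mpr hcy))]; ring
  obtain ⟨φ, hφ⟩ := h hf
  have heval : ∀ v (hv : P v), f (Finsupp.single (vtx P v hv) 1) =
      φ (Finsupp.single (nil1 P) 1) := by
    intro v hv
    have := DFunLike.congr_fun hφ (Finsupp.single (vtx P v hv) 1)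
    rw [LinearMap.dualMap_apply, ocBoundary_vtx] at this
    exact this.symm
  have h1 : f (Finsupp.single (vtx P a ha) 1) = f (Finsupp.single (vtx P b hb) 1) := by
    rw [heval a ha, heval b hb]
  rw [hfv a ha, hfv b hb, if_pos (Relation.ReflTransGen.refl)] at h1
  by_cases hcb : C b
  · exact hcb
  · rw [if_neg hcb] at h1; exact absurd h1 one_ne_zero

end AuxHomology
section AuxPoset

variable {Γ : Type} [PartialOrder Γ]

lemma RankedPoset.lt_of_ne_star (R : RankedPoset Γ) {x : Γ} (hx : x ≠ R.star) :
    R.star < x := lt_of_le_of_ne (R.bot_le x) (Ne.symm hx)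

lemma RankedPoset.eq_star_of_rk_eq_zero (R : RankedPoset Γ) {x : Γ}
    (hx : R.rk x = 0) : x = R.star := by
  by_contra h
  have := R.rk_strictMono (R.lt_of_ne_star h)
  rw [R.rk_star, hx] at this
  exact absurd this (by omega)

lemma RankedPoset.star_lt_of_rk_pos (R : RankedPoset Γ) {x : Γ}
    (hx : 0 < R.rk x) : R.star < x := by
  refine R.lt_of_ne_star fun h => ?_
  rw [h, R.rk_star] at hx
  exact absurd hx (by omega)

lemma exists_le_covby [Fintype Γ] {u b : Γ} (h : u < b) : ∃ w, u ≤ w ∧ w ⋖ b := by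
  classical
  obtain ⟨w, hw, hmax⟩ := Finite.exists_le_maximal (p := fun y => y < b) h
  refine ⟨w, hw, hmax.1, fun z hz hzb => ?_⟩
  exact absurd (hmax.2 hzb hz.le) (not_le_of_gt hz)

lemma memS1_rk (R : RankedPoset Γ) {x a : Γ} (h : memS1 R x a) :
    R.rk a + 1 = R.rk x := by
  have h1 := R.rk_strictMono h.1
  have h2 := h.2
  omega

lemma exists_memS1 [Fintype Γ] (R : RankedPoset Γ) {x : Γ} (hx : x ≠ R.star) :
    ∃ a, memS1 R x a := by
  obtain ⟨w, _, hw⟩ := exists_le_covby (R.lt_of_ne_star hx)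
  have := R.rk_covBy hw
  exact ⟨w, hw.1, by omega⟩

end AuxPoset
/-- `Γ` is uniform if and only if `H̃⁰(Δ(Γ_{b,q})) = 0` for every `b ∈ Γ₊` and every
`3 ≤ q ≤ rk b`.  (Here `H̃⁰ = redCohomology _ _ 1`.) -/
theorem uniform_iff_reduced_H0_eq_zero
    {Γ : Type} [PartialOrder Γ] [Fintype Γ] (R : RankedPoset Γ)
    (F : Type) [Field F] :
    R.Uniform ↔
      ∀ b : Γ, b ≠ R.star → ∀ q : ℕ, 3 ≤ q → q ≤ R.rk b →
        Subsingleton (redCohomology F (memGbq R b q) 1) := by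
  constructor
  · intro hu b hb q hq3 hqb
    have hrkb : 3 ≤ R.rk b := le_trans hq3 hqb
    obtain ⟨a₀, ha₀⟩ := exists_memS1 R hb
    have ha₀rk := memS1_rk R ha₀
    have topMem : ∀ t, memS1 R b t → memGbq R b q t := by
      intro t ht
      have := memS1_rk R ht
      exact ⟨R.star_lt_of_rk_pos (by omega), ht.1, by omega⟩
    have to_top : ∀ u, memGbq R b q u → ∃ t, memS1 R b t ∧
        Relation.ReflTransGen (pstep (memGbq R b q)) u t := by
      intro u hu'
      obtain ⟨w, huw, hwb⟩ := exists_le_covby hu'.2.1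
      have hrkw := R.rk_covBy hwb
      have hS1 : memS1 R b w := ⟨hwb.1, by omega⟩
      rcases eq_or_lt_of_le huw with h' | hlt
      · cases h'; exact ⟨_, hS1, Relation.ReflTransGen.refl⟩
      · exact ⟨w, hS1, Relation.ReflTransGen.single ⟨hu', topMem w hS1, Or.inl hlt⟩⟩
    have tops : ∀ s t, memS1 R b s → memS1 R b t →
        Relation.ReflTransGen (pstep (memGbq R b q)) s t := by
      intro s t hs ht
      have heq := (hu b hb).2 s t hs ht
      clear hs ht
      induction heq with
      | rel u v huv =>
        obtain ⟨hu1, hv1, c, hc1, hc2⟩ := huv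
        have hrku := memS1_rk R hu1
        have hrkc := memS1_rk R hc1
        have hPc : memGbq R b q c :=
          ⟨R.star_lt_of_rk_pos (by omega), lt_trans hc1.1 hu1.1, by omega⟩
        exact Relation.ReflTransGen.trans
          (Relation.ReflTransGen.single ⟨topMem u hu1, hPc, Or.inr hc1.1⟩)
          (Relation.ReflTransGen.single ⟨hPc, topMem v hv1, Or.inl hc2.1⟩)
      | refl => exact Relation.ReflTransGen.refl
      | symm x y _ ih => exact ((@Relation.ReflTransGen.stdSymm _ _ ⟨fun _ _ h => pstep_symm _ h⟩).symm _ _) ih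
      | trans x y z _ _ ih1 ih2 => exact ih1.trans ih2
    have hPa₀ : memGbq R b q a₀ :=
      ⟨R.star_lt_of_rk_pos (by omega), ha₀.1, by omega⟩
    apply conn_subsingleton F (memGbq R b q) a₀ hPa₀
    intro v hv'
    obtain ⟨tv, htv, hrv⟩ := to_top v hv'
    obtain ⟨t0, ht0, hr0⟩ := to_top a₀ hPa₀
    exact (hr0.trans (tops t0 tv ht0 htv)).trans
      (((@Relation.ReflTransGen.stdSymm _ _ ⟨fun _ _ h => pstep_symm _ h⟩).symm _ _) hrv)
  · intro h x hx
    refine ⟨exists_memS1 R hx, ?_⟩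
    intro a b ha hb
    have hrka := memS1_rk R ha
    have hrkb := memS1_rk R hb
    rcases Nat.lt_or_ge (R.rk x) 3 with hlt | hge
    · rcases Nat.lt_or_ge (R.rk x) 2 with h1 | h2
      · have hax : a = R.star := R.eq_star_of_rk_eq_zero (by omega)
        have hbx : b = R.star := R.eq_star_of_rk_eq_zero (by omega)
        rw [hax, hbx]
        exact Relation.EqvGen.refl _
      · have hsa : memS1 R a R.star :=
          ⟨R.star_lt_of_rk_pos (by omega), by rw [R.rk_star]; omega⟩
        have hsb : memS1 R b R.star :=
          ⟨R.star_lt_of_rk_pos (by omega), by rw [R.rk_star]; omega⟩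
        exact Relation.EqvGen.rel a b ⟨ha, hb, R.star, hsa, hsb⟩
    · have hsub := h x hx 3 le_rfl hge
      have hPa : memGbq R x 3 a := ⟨R.star_lt_of_rk_pos (by omega), ha.1, by omega⟩
      have hPb : memGbq R x 3 b := ⟨R.star_lt_of_rk_pos (by omega), hb.1, by omega⟩
      have hconn := subsingleton_conn F (memGbq R x 3) hsub a b hPa hPb
      have climb : ∀ v, Relation.ReflTransGen (pstep (memGbq R x 3)) a v →
          ∃ u, memS1 R x u ∧ v ≤ u ∧
            Relation.EqvGen
              (fun u v => memS1 R x u ∧ memS1 R x v ∧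
                ∃ c, memS1 R u c ∧ memS1 R v c) a u := by
        intro v hv
        induction hv with
        | refl => exact ⟨a, ha, le_rfl, Relation.EqvGen.refl a⟩
        | tail _ hstep ih =>
          rename_i p w _
          obtain ⟨u, hu, hpu, heq⟩ := ih
          obtain ⟨hPp, hPw, hcomp⟩ := hstep
          have hrku := memS1_rk R hu
          have hrkp1 := R.rk_strictMono hPp.2.1
          have hrkp2 := hPp.2.2
          have hrkw1 := R.rk_strictMono hPw.2.1
          have hrkw2 := hPw.2.2
          rcases Nat.lt_or_ge (R.rk w) (R.rk x - 1) with hwbot | hwtop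
          · -- w is bottom level: then w < p and p = u
            have hpw : w < p := by
              rcases hcomp with h' | h'
              · exact absurd (R.rk_strictMono h') (by omega)
              · exact h'
            have hpeq : p = u := by
              rcases eq_or_lt_of_le hpu with h' | h'
              · exact h'
              · exact absurd (R.rk_strictMono h') (by
                  have := R.rk_strictMono hpw
                  omega)
            exact ⟨u, hu, le_of_lt (hpeq ▸ hpw), heq⟩
          · -- w is top level
            have hw : memS1 R x w := ⟨hPw.2.1, by omega⟩
            have hpw : p < w := by
              rcases hcomp with h' | h'
              · exact h'
              · exact absurd (R.rk_strictMono h') (by omega)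
            have hrkp3 := R.rk_strictMono hpw
            have hplt : p < u := by
              rcases eq_or_lt_of_le hpu with h' | h'
              · exfalso
                have hpq := congrArg R.rk h'
                omega
              · exact h'
            have hrkp4 := R.rk_strictMono hplt
            have hsimuw : memS1 R u p ∧ memS1 R w p :=
              ⟨⟨hplt, by omega⟩, ⟨hpw, by omega⟩⟩
            exact ⟨w, hw, le_rfl,
              Relation.EqvGen.trans _ _ _ heq
                (Relation.EqvGen.rel u w ⟨hu, hw, p, hsimuw.1, hsimuw.2⟩)⟩
      obtain ⟨u, hu, hbu, heq⟩ := climb b hconn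
      rcases eq_or_lt_of_le hbu with h' | h'
      · rw [h']; exact heq
      · have := R.rk_strictMono h'
        have := memS1_rk R hu
        exact absurd (R.rk_strictMono h') (by omega)
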